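/- For 0 < ε < 1/2, d ∈ ℕ, k ≥ 1, and 0 < ρ < 1/2, the length of the path γ(s) = (sρ/2 + (1−s)r) for s ∈ [0,1], measured with respect to the weight function g(u) = u^(−ε)(1 − k·log u)^(d/2) on (0, ρ] (i.e., ∫₀¹ g(sρ/2 + (1−s)r)·|ρ/2 − r| ds with 0 < r < ρ), is bounded above by C·ρ^(1−ε)(−log ρ)^d for a constant C depending only on ε, d, k. -/

import Mathlib

open MeasureTheory Real

lemma aux_poly_exp (n : ℕ) (c t : ℝ) (hc : 0 < c) (ht : 0 ≤ t) :
    (1 + t) ^ n ≤ (1 + n / c) ^ n * Real.exp (c * t) := by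
  rcases Nat.eq_zero_or_pos n with h | h
  · simp only [h, pow_zero, one_mul]
    exact Real.one_le_exp (by positivity)
  · have hn : (0:ℝ) < n := by exact_mod_cast h
    have he1 : 1 ≤ Real.exp (c * t / n) := Real.one_le_exp (by positivity)
    have he2 : c * t / n ≤ Real.exp (c * t / n) :=
      le_trans (by linarith) (Real.add_one_le_exp _)
    have h1 : 1 + t ≤ (1 + n / c) * Real.exp (c * t / n) := by
      have : (n / c) * (c * t / n) = t := by field_simp
      nlinarith [mul_le_mul_of_nonneg_left he2 (le_of_lt (div_pos hn hc))]
    calc (1 + t) ^ n ≤ ((1 + n / c) * Real.exp (c * t / n)) ^ n :=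
          pow_le_pow_left₀ (by linarith) h1 n
      _ = (1 + n / c) ^ n * Real.exp (c * t / n) ^ n := mul_pow _ _ _
      _ = (1 + n / c) ^ n * Real.exp (c * t) := by
          rw [← Real.exp_nat_mul]
          congr 1
          field_simp

set_option maxHeartbeats 1000000 in
/-- The one-dimensional weighted length estimate for the radial path
`γ(s) = s ρ/2 + (1−s) r`. -/
theorem radial_path_length_estimate (ε : ℝ) (hε : 0 < ε) (hε' : ε < 1/2)
    (d : ℕ) (k : ℕ) (hk : 1 ≤ k) :
    ∃ C : ℝ, 0 < C ∧ ∀ ρ r : ℝ, 0 < ρ → ρ < 1/2 → 0 < r → r < ρ →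
      ∫ s in Set.Icc (0:ℝ) 1,
          (s * (ρ/2) + (1 - s) * r) ^ (-ε)
            * (1 - (k:ℝ) * Real.log (s * (ρ/2) + (1 - s) * r)) ^ ((d:ℝ)/2)
            * |ρ/2 - r|
        ≤ C * ρ ^ (1 - ε) * (-Real.log ρ) ^ d := by
  set δ : ℝ := (1 - ε) / 2 with hδdef
  have hδ : 0 < δ := by unfold δ; linarith
  set K : ℝ := 2 * (5 * (k:ℝ)) ^ d * (1 + (d:ℝ) / δ) ^ d with hKdef
  have hK : 0 < K := by
    have : (0:ℝ) < (k:ℝ) := by exact_mod_cast hk.trans_lt' Nat.zero_lt_one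
    positivity
  refine ⟨K / δ, by positivity, fun ρ r hρ hρ' hr hrρ => ?_⟩
  have hkpos : (0:ℝ) < (k:ℝ) := by exact_mod_cast Nat.lt_of_lt_of_le Nat.zero_lt_one hk
  have hk1 : (1:ℝ) ≤ (k:ℝ) := by exact_mod_cast hk
  set L : ℝ := -Real.log ρ with hLdef
  have hlog2 : Real.log 2 > 0.6931 := by
    have := Real.log_two_gt_d9; linarith
  have hL : Real.log 2 ≤ L := by
    have : Real.log ρ ≤ Real.log (1/2) := Real.log_le_log hρ (by linarith)
    rw [Real.log_div one_ne_zero two_ne_zero, Real.log_one] at this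
    unfold L; linarith
  have hLpos : 0 < L := lt_of_lt_of_le (by linarith) hL
  -- the dominating function
  set a : ℝ := ε + δ with hadef
  have ha1 : a < 1 := by unfold a δ; linarith
  have haneg : (-1:ℝ) < -a := by unfold a; simp only [neg_lt_neg_iff]; linarith [hε.le]
  set M : ℝ := K * ρ ^ (1 - ε) * L ^ d with hMdef
  have hM : 0 ≤ M := by positivity
  have hint : IntegrableOn (fun s : ℝ => M * s ^ (-a)) (Set.Ioc (0:ℝ) 1) volume := by
    have := (intervalIntegral.intervalIntegrable_rpow' (a := 0) (b := 1) haneg)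
    rw [intervalIntegrable_iff_integrableOn_Ioc_of_le zero_le_one] at this
    exact this.const_mul M
  rw [integral_Icc_eq_integral_Ioc]
  have hbound : ∀ s ∈ Set.Ioc (0:ℝ) 1,
      (s * (ρ/2) + (1 - s) * r) ^ (-ε)
        * (1 - (k:ℝ) * Real.log (s * (ρ/2) + (1 - s) * r)) ^ ((d:ℝ)/2)
        * |ρ/2 - r| ≤ M * s ^ (-a) := by
    intro s hs
    obtain ⟨hs0, hs1⟩ := hs
    set u : ℝ := s * (ρ/2) + (1 - s) * r with hudef
    have hu0 : 0 < u := by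
      have : 0 ≤ (1 - s) * r := mul_nonneg (by linarith) hr.le
      have : 0 < s * (ρ/2) := by positivity
      unfold u; linarith
    have hus : s * (ρ/2) ≤ u := by
      have : 0 ≤ (1 - s) * r := mul_nonneg (by linarith) hr.le
      unfold u; linarith
    have huρ : u ≤ ρ := by
      have h1 : s * (ρ/2) ≤ s * ρ := by nlinarith
      have h2 : (1 - s) * r ≤ (1 - s) * ρ := by nlinarith
      unfold u; nlinarith
    have hu1 : u < 1 := by linarith
    -- first factor
    have hA : u ^ (-ε) ≤ 2 * ρ ^ (-ε) * s ^ (-ε) := by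
      have h1 : u ^ (-ε) ≤ (s * (ρ/2)) ^ (-ε) :=
        Real.rpow_le_rpow_of_nonpos (by positivity) hus (by linarith)
      have h2 : (s * (ρ/2)) ^ (-ε) = s ^ (-ε) * (ρ/2) ^ (-ε) :=
        Real.mul_rpow hs0.le (by positivity)
      have h3 : (ρ/2) ^ (-ε) = ρ ^ (-ε) * 2 ^ ε := by
        rw [Real.div_rpow hρ.le (by norm_num), Real.rpow_neg (by norm_num : (0:ℝ) ≤ 2)]
        field_simp
      have h4 : (2:ℝ) ^ ε ≤ 2 := by
        calc (2:ℝ) ^ ε ≤ (2:ℝ) ^ (1:ℝ) :=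
              Real.rpow_le_rpow_of_exponent_le one_le_two (by linarith)
          _ = 2 := Real.rpow_one 2
      have h5 : ρ ^ (-ε) * 2 ^ ε ≤ ρ ^ (-ε) * 2 :=
        mul_le_mul_of_nonneg_left h4 (Real.rpow_nonneg hρ.le (-ε))
      have h6 : s ^ (-ε) * (ρ ^ (-ε) * 2 ^ ε) ≤ s ^ (-ε) * (ρ ^ (-ε) * 2) :=
        mul_le_mul_of_nonneg_left h5 (Real.rpow_nonneg hs0.le (-ε))
      calc u ^ (-ε) ≤ s ^ (-ε) * (ρ ^ (-ε) * 2 ^ ε) := by rw [← h3, ← h2]; exact h1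
        _ ≤ s ^ (-ε) * (ρ ^ (-ε) * 2) := h6
        _ = 2 * ρ ^ (-ε) * s ^ (-ε) := by ring
    -- second factor
    have hlogu : Real.log u < 0 := Real.log_neg hu0 hu1
    have hbase1 : (1:ℝ) ≤ 1 - (k:ℝ) * Real.log u := by
      have := mul_nonneg hkpos.le (neg_nonneg.2 hlogu.le)
      linarith
    have hB : (1 - (k:ℝ) * Real.log u) ^ ((d:ℝ)/2)
        ≤ K / 2 * L ^ d * s ^ (-δ) := by
      have hstep1 : (1 - (k:ℝ) * Real.log u) ^ ((d:ℝ)/2)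
          ≤ (1 - (k:ℝ) * Real.log u) ^ (d:ℝ) :=
        Real.rpow_le_rpow_of_exponent_le hbase1
          (by have : (0:ℝ) ≤ (d:ℝ) := Nat.cast_nonneg d; linarith)
      rw [Real.rpow_natCast] at hstep1
      set t : ℝ := -Real.log s with htdef
      have ht0 : 0 ≤ t := by
        have : Real.log s ≤ 0 := Real.log_nonpos hs0.le hs1
        unfold t; linarith
      have hlogu2 : Real.log (s * (ρ/2)) ≤ Real.log u :=
        Real.log_le_log (by positivity) hus
      have hlogsum : Real.log (s * (ρ/2)) = Real.log s + Real.log ρ - Real.log 2 := by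
        rw [Real.log_mul hs0.ne' (by positivity), Real.log_div hρ.ne' two_ne_zero]
        ring
      have hbase2 : 1 - (k:ℝ) * Real.log u ≤ 5 * (k:ℝ) * L * (1 + t) := by
        have h5 : -Real.log u ≤ t + L + Real.log 2 := by
          rw [hlogsum] at hlogu2; unfold t L at *; linarith
        have hh1 : (k:ℝ) * (-Real.log u) ≤ (k:ℝ) * (t + L + Real.log 2) :=
          mul_le_mul_of_nonneg_left h5 hkpos.le
        have hh2 : (k:ℝ) * Real.log 2 ≤ (k:ℝ) * L := mul_le_mul_of_nonneg_left hL hkpos.le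
        have hh3 : (0:ℝ) ≤ (k:ℝ) * t := mul_nonneg hkpos.le ht0
        have hh4 : (0:ℝ) ≤ ((k:ℝ) * t) * (5 * L - 1) :=
          mul_nonneg hh3 (by linarith)
        have hh5 : Real.log 2 ≤ (k:ℝ) * L := by nlinarith
        nlinarith
      have hstep2 : (1 - (k:ℝ) * Real.log u) ^ d ≤ (5 * (k:ℝ) * L) ^ d * (1 + t) ^ d := by
        rw [← mul_pow]
        apply pow_le_pow_left₀ (by linarith) _ d
        calc 1 - (k:ℝ) * Real.log u ≤ 5 * (k:ℝ) * L * (1 + t) := hbase2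
          _ = 5 * (k:ℝ) * L * (1 + t) := rfl
      have hstep3 : (1 + t) ^ d ≤ (1 + (d:ℝ) / δ) ^ d * Real.exp (δ * t) :=
        aux_poly_exp d δ t hδ ht0
      have hexp : Real.exp (δ * t) = s ^ (-δ) := by
        rw [Real.rpow_def_of_pos hs0]
        congr 1
        unfold t; ring
      have hsplit : (5 * (k:ℝ) * L) ^ d = (5 * (k:ℝ)) ^ d * L ^ d := by
        rw [← mul_pow]
      calc (1 - (k:ℝ) * Real.log u) ^ ((d:ℝ)/2)
          ≤ (1 - (k:ℝ) * Real.log u) ^ d := hstep1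
        _ ≤ (5 * (k:ℝ) * L) ^ d * (1 + t) ^ d := hstep2
        _ ≤ (5 * (k:ℝ) * L) ^ d * ((1 + (d:ℝ) / δ) ^ d * Real.exp (δ * t)) := by
            apply mul_le_mul_of_nonneg_left hstep3 (by positivity)
        _ = K / 2 * L ^ d * s ^ (-δ) := by
            rw [hexp, hsplit, hKdef]; ring
    -- third factor
    have hC : |ρ/2 - r| ≤ ρ := by
      rw [abs_le]; constructor <;> linarith
    -- combine
    have hAB : u ^ (-ε) * (1 - (k:ℝ) * Real.log u) ^ ((d:ℝ)/2) * |ρ/2 - r|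
        ≤ (2 * ρ ^ (-ε) * s ^ (-ε)) * (K / 2 * L ^ d * s ^ (-δ)) * ρ := by
      have h1 : (0:ℝ) ≤ u ^ (-ε) := Real.rpow_nonneg hu0.le _
      have h2 : (0:ℝ) ≤ (1 - (k:ℝ) * Real.log u) ^ ((d:ℝ)/2) :=
        Real.rpow_nonneg (by linarith) _
      have h3 : (0:ℝ) ≤ 2 * ρ ^ (-ε) * s ^ (-ε) := by positivity
      have h4 : (0:ℝ) ≤ K / 2 * L ^ d * s ^ (-δ) := by positivity
      exact mul_le_mul (mul_le_mul hA hB h2 h3) hC (abs_nonneg _) (mul_nonneg h3 h4)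
    refine hAB.trans (le_of_eq ?_)
    have hρsplit : ρ ^ (-ε) * ρ = ρ ^ (1 - ε) := by
      rw [show (1 - ε) = -ε + 1 by ring, Real.rpow_add hρ, Real.rpow_one]
    have hssplit : s ^ (-ε) * s ^ (-δ) = s ^ (-a) := by
      rw [show (-a) = -ε + -δ by unfold a; ring, Real.rpow_add hs0]
    rw [hMdef, ← hρsplit, ← hssplit]
    ring
  -- integral comparison
  have hnonneg : 0 ≤ᵐ[volume.restrict (Set.Ioc (0:ℝ) 1)]
      fun s => (s * (ρ/2) + (1 - s) * r) ^ (-ε)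
        * (1 - (k:ℝ) * Real.log (s * (ρ/2) + (1 - s) * r)) ^ ((d:ℝ)/2)
        * |ρ/2 - r| := by
    filter_upwards [ae_restrict_mem measurableSet_Ioc] with s hs
    obtain ⟨hs0, hs1⟩ := hs
    have hu0 : (0:ℝ) < s * (ρ/2) + (1 - s) * r := by
      have h1 : 0 ≤ (1 - s) * r := mul_nonneg (by linarith) hr.le
      have h2 : 0 < s * (ρ/2) := by positivity
      linarith
    have hb1 : (0:ℝ) ≤ (s * (ρ/2) + (1 - s) * r) ^ (-ε) := Real.rpow_nonneg hu0.le _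
    have hlogu : Real.log (s * (ρ/2) + (1 - s) * r) < 0 := by
      apply Real.log_neg hu0
      have h1 : s * (ρ/2) ≤ s * ρ := by nlinarith
      have h2 : (1 - s) * r ≤ (1 - s) * ρ := by nlinarith
      nlinarith
    have hb2 : (0:ℝ) ≤ (1 - (k:ℝ) * Real.log (s * (ρ/2) + (1 - s) * r)) ^ ((d:ℝ)/2) := by
      apply Real.rpow_nonneg
      have := mul_nonneg hkpos.le (neg_nonneg.2 hlogu.le)
      linarith
    exact mul_nonneg (mul_nonneg hb1 hb2) (abs_nonneg _)
  have hle : (fun s => (s * (ρ/2) + (1 - s) * r) ^ (-ε)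
        * (1 - (k:ℝ) * Real.log (s * (ρ/2) + (1 - s) * r)) ^ ((d:ℝ)/2)
        * |ρ/2 - r|) ≤ᵐ[volume.restrict (Set.Ioc (0:ℝ) 1)]
      fun s => M * s ^ (-a) := by
    filter_upwards [ae_restrict_mem measurableSet_Ioc] with s hs
    exact hbound s hs
  calc ∫ s in Set.Ioc (0:ℝ) 1,
        (s * (ρ/2) + (1 - s) * r) ^ (-ε)
          * (1 - (k:ℝ) * Real.log (s * (ρ/2) + (1 - s) * r)) ^ ((d:ℝ)/2)
          * |ρ/2 - r|
      ≤ ∫ s in Set.Ioc (0:ℝ) 1, M * s ^ (-a) :=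
        integral_mono_of_nonneg hnonneg hint hle
    _ = M * ∫ s in Set.Ioc (0:ℝ) 1, s ^ (-a) := integral_const_mul M _
    _ = M * (1 / δ) := by
        rw [← intervalIntegral.integral_of_le zero_le_one,
          integral_rpow (Or.inl haneg), Real.one_rpow,
          Real.zero_rpow (by unfold a δ at *; linarith : -a + 1 ≠ 0)]
        congr 1
        unfold a δ
        ring_nf
    _ = K / δ * ρ ^ (1 - ε) * (-Real.log ρ) ^ d := by
        rw [hMdef, hLdef]; ring
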